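/- arXiv:2508.00463 — 2 statements merged into one kernel-verified Lean document; each statement's English description precedes it below -/
import Mathlib

section
/- Let (X, m) be a probability space with a measure-preserving ℤⁿ-action, let U be a measurable set that is a disjoint union U = ⊔_{z ∈ Q_h} T^z B over the cube Q_h of side h (a Rokhlin tower of height h with base B), and let N < h. Define Δ_out = {x ∉ U : T^z x ∈ U for some z ∈ Q_N}. Then m(Δ_out) ≤ m(U) · ((h+N)ⁿ / hⁿ − 1). -/
open MeasureTheory Filter
open scoped ENNReal

/-- The cube `Q_h = {z ∈ ℤⁿ : 1 ≤ z_i ≤ h}`. -/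
noncomputable def cube (n h : ℕ) : Finset (Fin n → ℤ) := Finset.Icc 1 (fun _ => (h : ℤ))

set_option autoImplicit false

private def gfun (n t : ℕ) : ℕ := ∑ j ∈ Finset.range n, n.choose j * t ^ j

private lemma gfun_succ (n t : ℕ) : (t+1)^n = t^n + gfun n t := by
  rw [add_pow, Finset.sum_range_succ, gfun]
  simp only [one_pow, mul_one, Nat.choose_self, Nat.cast_id]
  rw [add_comm]
  congr 1
  apply Finset.sum_congr rfl
  intro j _
  exact mul_comm _ _

private lemma gfun_mono (n : ℕ) {s t : ℕ} (hst : s ≤ t) : gfun n s ≤ gfun n t :=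
  Finset.sum_le_sum fun j _ => Nat.mul_le_mul_left _ (Nat.pow_le_pow_left hst j)

private lemma gfun_decomp (n b M : ℕ) : (b+M)^n = b^n + ∑ k ∈ Finset.range M, gfun n (b+k) := by
  induction M with
  | zero => simp
  | succ M ih =>
    rw [Finset.sum_range_succ, show b + (M+1) = (b+M)+1 from rfl, gfun_succ, ih, add_assoc]

private lemma nat_key (n N a : ℕ) : (a+N)^n + (a+1)^n ≤ (a+1+N)^n + a^n := by
  rw [gfun_decomp n a N, gfun_decomp n (a+1) N, gfun_succ]
  have : ∑ k ∈ Finset.range N, gfun n (a+k) ≤ ∑ k ∈ Finset.range N, gfun n (a+1+k) :=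
    Finset.sum_le_sum fun k _ => gfun_mono n (by omega)
  omega

theorem stmt_2 {X : Type*} [MeasurableSpace X] (m : Measure X) [IsProbabilityMeasure m]
    (n : ℕ) (T : (Fin n → ℤ) → X → X)
    (hmp : ∀ z, MeasurePreserving (T z) m m)
    (hact : ∀ z w x, T (z + w) x = T z (T w x)) (hid : ∀ x, T 0 x = x)
    (h N : ℕ) (hN : 1 ≤ N) (hNh : N < h)
    (B : Set X) (hB : MeasurableSet B)
    (hdisj : ∀ z ∈ cube n h, ∀ w ∈ cube n h, z ≠ w → Disjoint (T z '' B) (T w '' B))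
    (U : Set X) (hU : U = ⋃ z ∈ cube n h, T z '' B)
    (Δout : Set X) (hΔ : Δout = {x | x ∉ U ∧ ∃ z ∈ cube n N, T z x ∈ U}) :
    (m Δout).toReal ≤ (m U).toReal * (((h : ℝ) + N) ^ n / (h : ℝ) ^ n - 1) := by
  -- image as preimage
  have himg : ∀ v : Fin n → ℤ, T v '' B = T (-v) ⁻¹' B := by
    intro v
    ext x
    constructor
    · rintro ⟨b, hb, rfl⟩
      have : T (-v) (T v b) = b := by rw [← hact, neg_add_cancel, hid]
      simpa [Set.mem_preimage, this]
    · intro hx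
      exact ⟨T (-v) x, hx, by rw [← hact, add_neg_cancel, hid]⟩
  have hmeas : ∀ v : Fin n → ℤ, MeasurableSet (T v '' B) := by
    intro v; rw [himg]; exact (hmp (-v)).measurable hB
  have hmB : ∀ v : Fin n → ℤ, m (T v '' B) = m B := by
    intro v; rw [himg]; exact (hmp (-v)).measure_preimage hB.nullMeasurableSet
  -- measure of U
  have hcard_cube : ∀ H : ℕ, (cube n H).card = H ^ n := by
    intro H
    rw [cube, Pi.card_Icc]
    simp [Int.card_Icc]
  have hpd : (↑(cube n h) : Set (Fin n → ℤ)).PairwiseDisjoint (fun z => T z '' B) :=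
    fun z hz w hw hzw => hdisj z (by simpa using hz) w (by simpa using hw) hzw
  have hUm : m U = (h : ℝ≥0∞) ^ n * m B := by
    rw [hU, measure_biUnion_finset hpd (fun v _ => hmeas v),
      Finset.sum_congr rfl (fun v _ => hmB v), Finset.sum_const, hcard_cube, nsmul_eq_mul]
    push_cast
    ring
  -- the covering set
  set S : Finset (Fin n → ℤ) :=
    (Finset.Icc (fun _ => (1 - N : ℤ)) (fun _ => ((h : ℤ) - 1))) \ cube n h with hS
  have hincl : Δout ⊆ ⋃ v ∈ S, T v '' B := by
    rw [hΔ]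
    rintro x ⟨hxU, z, hz, hzx⟩
    rw [hU] at hzx
    simp only [Set.mem_iUnion] at hzx
    obtain ⟨w, hw, b, hb, hwb⟩ := hzx
    have hxeq : x = T (w - z) b := by
      have h1 : T (-z) (T z x) = x := by rw [← hact, neg_add_cancel, hid]
      rw [← h1, ← hwb, ← hact]
      congr 1
      abel
    have hwz_mem : w - z ∈ Finset.Icc (fun _ => (1 - N : ℤ)) (fun _ => ((h : ℤ) - 1)) := by
      rw [Finset.mem_Icc]
      rw [cube, Finset.mem_Icc] at hz hw
      constructor
      · intro i
        have a1 := hz.2 i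
        have a2 := hw.1 i
        simp only [Pi.sub_apply, Pi.one_apply] at *
        omega
      · intro i
        have a1 := hz.1 i
        have a2 := hw.2 i
        simp only [Pi.sub_apply, Pi.one_apply] at *
        omega
    have hwz_not : w - z ∉ cube n h := by
      intro hmem
      apply hxU
      rw [hU]
      exact Set.mem_biUnion hmem ⟨b, hb, hxeq.symm⟩
    exact Set.mem_biUnion (Finset.mem_sdiff.mpr ⟨hwz_mem, hwz_not⟩) ⟨b, hb, hxeq.symm⟩
  -- measure bound
  have hΔm : m Δout ≤ (S.card : ℝ≥0∞) * m B := by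
    calc m Δout ≤ m (⋃ v ∈ S, T v '' B) := measure_mono hincl
    _ ≤ ∑ v ∈ S, m (T v '' B) := measure_biUnion_finset_le _ _
    _ = (S.card : ℝ≥0∞) * m B := by
        rw [Finset.sum_congr rfl (fun v _ => hmB v), Finset.sum_const]; simp [mul_comm]
  -- card bound : S.card + h^n ≤ (h+N)^n
  have hScard : S.card + h ^ n ≤ (h + N) ^ n := by
    have hsub : (Finset.Icc (fun _ => (1 : ℤ)) (fun _ => ((h : ℤ) - 1)) : Finset (Fin n → ℤ))
        ⊆ Finset.Icc (fun _ => (1 - N : ℤ)) (fun _ => ((h : ℤ) - 1)) := by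
      apply Finset.Icc_subset_Icc _ le_rfl
      intro i
      have : (1 - (N:ℤ)) ≤ 1 := by omega
      simp
    have hsub2 : (Finset.Icc (fun _ => (1 : ℤ)) (fun _ => ((h : ℤ) - 1)) : Finset (Fin n → ℤ))
        ⊆ cube n h := by
      apply Finset.Icc_subset_Icc le_rfl
      intro i; simp
    have hSsub : S ⊆ (Finset.Icc (fun _ => (1 - N : ℤ)) (fun _ => ((h : ℤ) - 1)) : Finset (Fin n → ℤ))
        \ Finset.Icc (fun _ => (1 : ℤ)) (fun _ => ((h : ℤ) - 1)) := by
      rw [hS]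
      exact Finset.sdiff_subset_sdiff le_rfl hsub2
    have h1 : S.card ≤ (Finset.Icc (fun _ => (1 - N : ℤ)) (fun _ => ((h : ℤ) - 1)) : Finset (Fin n → ℤ)).card
        - (Finset.Icc (fun _ => (1 : ℤ)) (fun _ => ((h : ℤ) - 1)) : Finset (Fin n → ℤ)).card := by
      calc S.card ≤ _ := Finset.card_le_card hSsub
      _ = _ := Finset.card_sdiff_of_subset hsub
    have hc1 : (Finset.Icc (fun _ => (1 - N : ℤ)) (fun _ => ((h : ℤ) - 1))
        : Finset (Fin n → ℤ)).card = (h + N - 1) ^ n := by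
      rw [Pi.card_Icc]
      simp only [Int.card_Icc, Finset.prod_const, Finset.card_univ, Fintype.card_fin]
      congr 1
      omega
    have hc2 : (Finset.Icc (fun _ => (1 : ℤ)) (fun _ => ((h : ℤ) - 1))
        : Finset (Fin n → ℤ)).card = (h - 1) ^ n := by
      rw [Pi.card_Icc]
      simp only [Int.card_Icc, Finset.prod_const, Finset.card_univ, Fintype.card_fin]
      congr 1
      omega
    rw [hc1, hc2] at h1
    have hkey := nat_key n N (h - 1)
    have e1 : h - 1 + 1 = h := by omega
    have e2 : h - 1 + N = h + N - 1 := by omega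
    have e3 : h - 1 + 1 + N = h + N := by omega
    rw [e3, e1, e2] at hkey
    have hmono : (h - 1) ^ n ≤ (h + N - 1) ^ n := Nat.pow_le_pow_left (by omega) n
    omega
  -- convert to reals
  have hBfin : m B ≠ ⊤ := (measure_lt_top m B).ne
  have hΔfin : m Δout ≠ ⊤ := (measure_lt_top m Δout).ne
  have hbr : (m Δout).toReal ≤ (S.card : ℝ) * (m B).toReal := by
    have := ENNReal.toReal_mono (by finiteness) hΔm
    rwa [ENNReal.toReal_mul, ENNReal.toReal_natCast] at this
  have hUr : (m U).toReal = (h : ℝ) ^ n * (m B).toReal := by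
    rw [hUm, ENNReal.toReal_mul, ENNReal.toReal_pow, ENNReal.toReal_natCast]
  rw [hUr]
  have hhpos : (0:ℝ) < (h:ℝ) := by exact_mod_cast (by omega : 0 < h)
  have hh0 : (0 : ℝ) < (h : ℝ) ^ n := by positivity
  have hrhs : (h : ℝ) ^ n * (m B).toReal * (((h : ℝ) + N) ^ n / (h : ℝ) ^ n - 1)
      = (m B).toReal * (((h : ℝ) + N) ^ n - (h : ℝ) ^ n) := by
    field_simp
  rw [hrhs]
  refine hbr.trans ?_
  rw [mul_comm]
  apply mul_le_mul_of_nonneg_left _ ENNReal.toReal_nonneg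
  have : ((S.card : ℝ) + (h : ℝ) ^ n) ≤ ((h : ℝ) + N) ^ n := by
    calc ((S.card : ℝ) + (h:ℝ)^n) = ((S.card + h ^ n : ℕ) : ℝ) := by push_cast; ring
    _ ≤ (((h + N)^n : ℕ) : ℝ) := by exact_mod_cast hScard
    _ = ((h:ℝ) + N)^n := by push_cast; ring
  linarith
end

section
/- Let (X, m) be a probability space with a measure-preserving ℤⁿ-action, let U = ⊔_{z ∈ Q_h} T^z B be a Rokhlin tower of height h, and let N < h. Define Δ_in = {x ∈ U : T^z x ∉ U for some z ∈ Q_N}. Then m(Δ_in) ≤ m(U) · (1 − (h − N)ⁿ / hⁿ). -/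
open MeasureTheory Filter

set_option autoImplicit false

lemma cube_card (n h : ℕ) : (cube n h).card = h ^ n := by
  simp [cube, Pi.card_Icc, Int.card_Icc]

lemma cube_subset (n : ℕ) {a b : ℕ} (hab : a ≤ b) : cube n a ⊆ cube n b := by
  intro z hz
  simp only [cube, Finset.mem_Icc, Pi.le_def] at hz ⊢
  exact ⟨hz.1, fun i => le_trans (hz.2 i) (by exact_mod_cast hab)⟩

lemma cube_add {n N h : ℕ} (hNh : N ≤ h) {z w : Fin n → ℤ}
    (hz : z ∈ cube n N) (hw : w ∈ cube n (h - N)) : z + w ∈ cube n h := by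
  simp only [cube, Finset.mem_Icc, Pi.le_def] at hz hw ⊢
  constructor
  · intro i
    have := hz.1 i; have := hw.1 i
    simp only [Pi.add_apply, Pi.one_apply] at *
    omega
  · intro i
    have h1 := hz.2 i; have h2 := hw.2 i
    simp only [Pi.add_apply] at *
    have : ((h - N : ℕ) : ℤ) = (h : ℤ) - N := by omega
    omega

theorem stmt_3 {X : Type*} [MeasurableSpace X] (m : Measure X) [IsProbabilityMeasure m]
    (n : ℕ) (T : (Fin n → ℤ) → X → X)
    (hmp : ∀ z, MeasurePreserving (T z) m m)
    (hact : ∀ z w x, T (z + w) x = T z (T w x)) (hid : ∀ x, T 0 x = x)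
    (h N : ℕ) (hN : 1 ≤ N) (hNh : N < h)
    (B : Set X) (hB : MeasurableSet B)
    (hdisj : ∀ z ∈ cube n h, ∀ w ∈ cube n h, z ≠ w → Disjoint (T z '' B) (T w '' B))
    (U : Set X) (hU : U = ⋃ z ∈ cube n h, T z '' B)
    (Δin : Set X) (hΔ : Δin = {x | x ∈ U ∧ ∃ z ∈ cube n N, T z x ∉ U}) :
    (m Δin).toReal ≤ (m U).toReal * (1 - ((h : ℝ) - N) ^ n / (h : ℝ) ^ n) := by
  have hinv : ∀ z x, T z (T (-z) x) = x := fun z x => by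
    rw [← hact]; simp [hid]
  have himg : ∀ z, T z '' B = T (-z) ⁻¹' B := by
    intro z; ext x
    constructor
    · rintro ⟨b, hb, rfl⟩
      have hb' : T (-z) (T z b) = b := by rw [← hact]; simp [hid]
      simpa [Set.mem_preimage, hb']
    · intro hx
      exact ⟨T (-z) x, hx, hinv z x⟩
  have hmeas : ∀ z, MeasurableSet (T z '' B) := fun z => by
    rw [himg]; exact (hmp (-z)).measurable hB
  have hmB : ∀ z, m (T z '' B) = m B := fun z => by
    rw [himg]; exact (hmp (-z)).measure_preimage hB.nullMeasurableSet
  -- measure of a union over a subcube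
  have hmeasure_union : ∀ k : ℕ, k ≤ h →
      m (⋃ z ∈ cube n k, T z '' B) = (k : ENNReal) ^ n * m B := by
    intro k hk
    rw [measure_biUnion_finset ?_ (fun z _ => hmeas z)]
    · simp only [hmB, Finset.sum_const, nsmul_eq_mul, cube_card]
      push_cast; ring
    · intro z hz w hw hzw
      exact hdisj z (cube_subset n hk hz) w (cube_subset n hk hw) hzw
  have hmU : m U = (h : ENNReal) ^ n * m B := hU ▸ hmeasure_union h le_rfl
  set G : Set X := ⋃ z ∈ cube n (h - N), T z '' B with hG
  have hmG : m G = ((h - N : ℕ) : ENNReal) ^ n * m B := hmeasure_union (h - N) (by omega)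
  have hGU : G ⊆ U := by
    rw [hU]
    exact Set.biUnion_subset_biUnion_left (by exact_mod_cast cube_subset n (by omega))
  have hGmeas : MeasurableSet G := Finset.measurableSet_biUnion _ (fun z _ => hmeas z)
  -- Δin ⊆ U \ G
  have hsub : Δin ⊆ U \ G := by
    intro x hx
    rw [hΔ] at hx
    obtain ⟨hxU, z, hz, hzU⟩ := hx
    refine ⟨hxU, fun hxG => hzU ?_⟩
    simp only [hG, Set.mem_iUnion] at hxG
    obtain ⟨w, hw, b, hb, rfl⟩ := hxG
    rw [hU]
    simp only [Set.mem_iUnion]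
    exact ⟨z + w, cube_add hNh.le hz hw, b, hb, hact z w b⟩
  have hle : m Δin ≤ m U - m G := by
    calc m Δin ≤ m (U \ G) := measure_mono hsub
    _ = m U - m G := measure_diff hGU hGmeas.nullMeasurableSet (measure_ne_top m G)
  -- pass to reals
  have hGleU : m G ≤ m U := measure_mono hGU
  have h1 : (m Δin).toReal ≤ (m U).toReal - (m G).toReal := by
    have := ENNReal.toReal_mono (by
      exact ne_top_of_le_ne_top (measure_ne_top m U) tsub_le_self) hle
    rwa [ENNReal.toReal_sub_of_le hGleU (measure_ne_top m U)] at this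
  refine h1.trans ?_
  have hUr : (m U).toReal = (h : ℝ) ^ n * (m B).toReal := by
    rw [hmU, ENNReal.toReal_mul, ENNReal.toReal_pow, ENNReal.toReal_natCast]
  have hcast : ((h - N : ℕ) : ℝ) = (h : ℝ) - N := by
    push_cast [Nat.cast_sub hNh.le]; ring
  have hGr : (m G).toReal = ((h : ℝ) - N) ^ n * (m B).toReal := by
    rw [hmG, ENNReal.toReal_mul, ENNReal.toReal_pow, ENNReal.toReal_natCast, hcast]
  rw [hUr, hGr]
  have hh0 : (0 : ℝ) < (h : ℝ) := by exact_mod_cast (by omega : 0 < h)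
  have hh : (0 : ℝ) < (h : ℝ) ^ n := by positivity
  have key : (h : ℝ) ^ n * (m B).toReal * (1 - ((h : ℝ) - N) ^ n / (h : ℝ) ^ n)
      = (h : ℝ) ^ n * (m B).toReal - ((h : ℝ) - N) ^ n * (m B).toReal := by
    field_simp
  linarith
end
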